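/- Every positive integer m can be written in the form m = x² + 3y² + z² + 3u² with x, y, z, u integers. -/

import Mathlib

set_option maxHeartbeats 2000000



lemma E_zero {x y : ℤ} (h : x^2 + x*y + y^2 ≤ 0) : x = 0 ∧ y = 0 := by
  have hy : y^2 = 0 := by nlinarith [sq_nonneg (2*x+y), sq_nonneg y]
  have hx : (2*x+y)^2 = 0 := by nlinarith [sq_nonneg (2*x+y), sq_nonneg y]
  have hy' := sq_eq_zero_iff.mp hy
  have hx' := sq_eq_zero_iff.mp hx
  constructor <;> linarith

lemma K_nonneg {m k K : ℤ} (h : k = m*K) (hk : 0 ≤ k) (hm : 0 < m) : 0 ≤ K := by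
  nlinarith

lemma K_lt {m K : ℤ} (hm : 0 < m) (h : 16*(m*K) ≤ 14*m^2) : K < m := by
  nlinarith

lemma E_nonneg (x y : ℤ) : 0 ≤ x^2 + x*y + y^2 := by
  nlinarith [sq_nonneg (2*x+y), sq_nonneg y]

lemma round_aux (m z w : ℤ) (hm : 0 < m) :
    ∃ r : ℤ, (m ∣ r - z) ∧ -m ≤ 2*r + w ∧ 2*r + w < m := by
  refine ⟨z - m * ((2*z + w + m) / (2*m)), ⟨-((2*z + w + m) / (2*m)), by ring⟩, ?_, ?_⟩
  · have h := Int.emod_nonneg (2*z + w + m) (by positivity : (2*m) ≠ 0)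
    rw [Int.emod_def] at h
    nlinarith [h]
  · have h := Int.emod_lt_of_pos (2*z + w + m) (by positivity : 0 < 2*m)
    rw [Int.emod_def] at h
    nlinarith [h]

lemma eround (m z1 z2 : ℤ) (hm : 0 < m) :
    ∃ r1 r2 : ℤ, (m ∣ r1 - z1) ∧ (m ∣ r2 - z2) ∧ 16*(r1^2 + r1*r2 + r2^2) ≤ 7*m^2 := by
  obtain ⟨r2, hd2, hl2, hu2⟩ := round_aux m z2 0 hm
  obtain ⟨r1, hd1, hl1, hu1⟩ := round_aux m z1 r2 hm
  refine ⟨r1, r2, hd1, hd2, ?_⟩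
  nlinarith [sq_nonneg (2*r1 + r2), sq_nonneg r2, hl1, hu1, hl2, hu2]

lemma descend (p : ℕ) (hp : p.Prime) : ∀ m : ℕ, 0 < m → m < p →
    (∃ a c b d : ℤ, (m : ℤ) * p = (a^2+a*c+c^2) + (b^2+b*d+d^2)) →
    ∃ a c b d : ℤ, (p : ℤ) = (a^2+a*c+c^2) + (b^2+b*d+d^2) := by
  intro m
  induction m using Nat.strong_induction_on with
  | _ m IH =>
  intro hm hmp h
  obtain ⟨a, c, b, d, hq⟩ := h
  by_cases hm1 : m = 1
  · subst hm1; exact ⟨a, c, b, d, by simpa using hq⟩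
  have hm2 : 2 ≤ m := by omega
  have hM0 : (0:ℤ) < (m:ℤ) := by exact_mod_cast hm
  have hMne : ((m:ℤ)) ≠ 0 := ne_of_gt hM0
  obtain ⟨r1, r2, hd1, hd2, hb1⟩ := eround (m:ℤ) (a+c) (-c) hM0
  obtain ⟨r3, r4, hd3, hd4, hb2⟩ := eround (m:ℤ) (-b) (-d) hM0
  obtain ⟨s1, hs1⟩ := hd1
  obtain ⟨s2, hs2⟩ := hd2
  obtain ⟨s3, hs3⟩ := hd3
  obtain ⟨s4, hs4⟩ := hd4
  have e1 : r1 = a + c + (m:ℤ)*s1 := by linarith [hs1]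
  have e2 : r2 = -c + (m:ℤ)*s2 := by linarith [hs2]
  have e3 : r3 = -b + (m:ℤ)*s3 := by linarith [hs3]
  have e4 : r4 = -d + (m:ℤ)*s4 := by linarith [hs4]
  have hknn : 0 ≤ (r1^2+r1*r2+r2^2) + (r3^2+r3*r4+r4^2) :=
    add_nonneg (E_nonneg r1 r2) (E_nonneg r3 r4)
  obtain ⟨K, hKdef⟩ : ∃ K : ℤ, K = (p:ℤ) + ((2*(a+c)*s1 + (a+c)*s2 - c*s1 - 2*c*s2 - 2*b*s3 - b*s4 - d*s3 - 2*d*s4)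
      + (m:ℤ)*((s1^2+s1*s2+s2^2) + (s3^2+s3*s4+s4^2))) := ⟨_, rfl⟩
  have hk : (r1^2+r1*r2+r2^2) + (r3^2+r3*r4+r4^2) = (m:ℤ) * K := by
    rw [hKdef, e1, e2, e3, e4]; linear_combination -hq
  have hK0 : 0 ≤ K := K_nonneg hk hknn hM0
  have hKm : K < (m:ℤ) := K_lt hM0 (by linarith [hb1, hb2, hk])
  rcases eq_or_lt_of_le hK0 with hKz | hKpos
  · -- K = 0 : contradiction with primality of p
    exfalso
    have hkz : (r1^2+r1*r2+r2^2) + (r3^2+r3*r4+r4^2) = 0 := by rw [hk, ← hKz]; ring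
    obtain ⟨z1, z2⟩ := E_zero (le_of_eq (by linarith [hkz, E_nonneg r3 r4, E_nonneg r1 r2] :
      r1^2+r1*r2+r2^2 = 0))
    obtain ⟨z3, z4⟩ := E_zero (le_of_eq (by linarith [hkz, E_nonneg r1 r2, E_nonneg r3 r4] :
      r3^2+r3*r4+r4^2 = 0))
    rw [z1] at e1; rw [z2] at e2; rw [z3] at e3; rw [z4] at e4
    have hc : c = (m:ℤ)*s2 := by linarith
    have ha : a = -((m:ℤ)*s2) - (m:ℤ)*s1 := by linarith
    have hb : b = (m:ℤ)*s3 := by linarith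
    have hd : d = (m:ℤ)*s4 := by linarith
    have hpm : (m:ℤ) * (p:ℤ) = (m:ℤ) * ((m:ℤ) * (((s1+s2)^2 - (s1+s2)*s2 + s2^2)
        + (s3^2+s3*s4+s4^2))) := by
      rw [ha, hc, hb, hd] at hq
      linear_combination hq
    have hcancel := mul_left_cancel₀ hMne hpm
    have hdvd : (m:ℤ) ∣ (p:ℤ) := Dvd.intro _ hcancel.symm
    have hdvd' : m ∣ p := Int.ofNat_dvd.mp (by exact_mod_cast hdvd)
    rcases Nat.Prime.eq_one_or_self_of_dvd hp m hdvd' with h1 | h2 <;> omega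
  · -- 0 < K : descend to a smaller multiple of p
    have h1 : a*r1 - c*r2 - b*r3 - b*r4 - d*r4
        = (m:ℤ) * ((p:ℤ) + (a*s1 - c*s2 - b*s3 - b*s4 - d*s4)) := by
      rw [e1, e2, e3, e4]; linear_combination -hq
    have h2 : a*r2 + c*r1 + c*r2 + b*r4 - d*r3
        = (m:ℤ) * (a*s2 + c*s1 + c*s2 + b*s4 - d*s3) := by
      rw [e1, e2, e3, e4]; ring
    have h3 : a*r3 - c*r4 + b*r1 + b*r2 + d*r2
        = (m:ℤ) * (a*s3 - c*s4 + b*s1 + b*s2 + d*s2) := by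
      rw [e1, e2, e3, e4]; ring
    have h4 : a*r4 + c*r3 + c*r4 - b*r2 + d*r1
        = (m:ℤ) * (a*s4 + c*s3 + c*s4 - b*s2 + d*s1) := by
      rw [e1, e2, e3, e4]; ring
    have hmult : ((a*r1 - c*r2 - b*r3 - b*r4 - d*r4)^2
          + (a*r1 - c*r2 - b*r3 - b*r4 - d*r4)*(a*r2 + c*r1 + c*r2 + b*r4 - d*r3)
          + (a*r2 + c*r1 + c*r2 + b*r4 - d*r3)^2)
        + ((a*r3 - c*r4 + b*r1 + b*r2 + d*r2)^2
          + (a*r3 - c*r4 + b*r1 + b*r2 + d*r2)*(a*r4 + c*r3 + c*r4 - b*r2 + d*r1)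
          + (a*r4 + c*r3 + c*r4 - b*r2 + d*r1)^2)
        = ((a^2+a*c+c^2) + (b^2+b*d+d^2)) * ((r1^2+r1*r2+r2^2) + (r3^2+r3*r4+r4^2)) := by
      ring
    rw [h1, h2, h3, h4, ← hq, hk] at hmult
    obtain ⟨T1, hT1⟩ : ∃ T : ℤ, T = (p:ℤ) + (a*s1 - c*s2 - b*s3 - b*s4 - d*s4) := ⟨_, rfl⟩
    obtain ⟨T2, hT2⟩ : ∃ T : ℤ, T = a*s2 + c*s1 + c*s2 + b*s4 - d*s3 := ⟨_, rfl⟩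
    obtain ⟨T3, hT3⟩ : ∃ T : ℤ, T = a*s3 - c*s4 + b*s1 + b*s2 + d*s2 := ⟨_, rfl⟩
    obtain ⟨T4, hT4⟩ : ∃ T : ℤ, T = a*s4 + c*s3 + c*s4 - b*s2 + d*s1 := ⟨_, rfl⟩
    rw [← hT1, ← hT2, ← hT3, ← hT4] at hmult
    have hnew : K * (p:ℤ) = (T1^2 + T1*T2 + T2^2) + (T3^2 + T3*T4 + T4^2) := by
      have hmm : ((m:ℤ)*(m:ℤ)) ≠ 0 := mul_ne_zero hMne hMne
      apply mul_left_cancel₀ hmm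
      linear_combination -hmult
    lift K to ℕ using hK0 with K' hK'
    have hKm' : K' < m := by exact_mod_cast hKm
    have hKpos' : 0 < K' := by exact_mod_cast hKpos
    exact IH K' hKm' hKpos' (by omega) ⟨T1, T2, T3, T4, by exact_mod_cast hnew⟩





/-- `-1` is of the form `x² + 3y²` mod an odd prime `p ≠ 3`. -/
lemma neg_one_eq (p : ℕ) (hp : p.Prime) (hp2 : p ≠ 2) (hp3 : p ≠ 3) :
    ∃ x y : ZMod p, x^2 + 3*y^2 + 1 = 0 := by
  haveI : Fact p.Prime := ⟨hp⟩
  have hch : ringChar (ZMod p) ≠ 2 := by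
    rw [ZMod.ringChar_zmod_n]; exact hp2
  have h3ne : (3 : ZMod p) ≠ 0 := by
    intro h
    have hd : p ∣ 3 := (ZMod.natCast_eq_zero_iff 3 p).mp (by exact_mod_cast h)
    have h1 := Nat.le_of_dvd (by norm_num) hd
    have h2 := hp.two_le
    interval_cases p <;> simp_all
  by_cases h1 : IsSquare (-1 : ZMod p)
  · obtain ⟨s, hs⟩ := h1
    exact ⟨s, 0, by linear_combination -hs⟩
  · by_cases h3 : IsSquare (3 : ZMod p)
    · obtain ⟨t, ht⟩ := h3
      have htne : t ≠ 0 := by rintro rfl; simp at ht; exact h3ne ht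
      obtain ⟨u, v, huv⟩ := ZMod.sq_add_sq p (-1)
      refine ⟨u, v * t⁻¹, ?_⟩
      have : 3 * (v * t⁻¹)^2 = v^2 := by
        field_simp [ht]
        linear_combination v^2 * ht
      rw [this]
      linear_combination huv
    · -- both -1 and 3 are nonsquares, so -3 is a square
      have hm1 : quadraticChar (ZMod p) (-1) = -1 :=
        (quadraticChar_neg_one_iff_not_isSquare).mpr h1
      have h3' : quadraticChar (ZMod p) 3 = -1 :=
        (quadraticChar_neg_one_iff_not_isSquare).mpr h3
      have hm3 : quadraticChar (ZMod p) (-3) = 1 := by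
        have : (-3 : ZMod p) = (-1) * 3 := by ring
        rw [this, map_mul, hm1, h3']; ring
      have hm3ne : (-3 : ZMod p) ≠ 0 := by
        intro h; apply h3ne; linear_combination -h
      have : IsSquare (-3 : ZMod p) :=
        (quadraticChar_one_iff_isSquare hm3ne).mp hm3
      obtain ⟨t, ht⟩ := this
      have htne : t ≠ 0 := by rintro rfl; simp at ht; exact h3ne ht
      refine ⟨0, t⁻¹, ?_⟩
      have : 3 * (t⁻¹)^2 = -1 := by
        have h9 : t^2 = -3 := by rw [ht]; ring
        field_simp [h9]
        linear_combination h9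
      rw [this]; ring

lemma prime_rep (p : ℕ) (hp : p.Prime) :
    ∃ a c b d : ℤ, (p : ℤ) = (a^2+a*c+c^2) + (b^2+b*d+d^2) := by
  by_cases hp2 : p = 2
  · exact ⟨1, 0, 1, 0, by rw [hp2]; norm_num⟩
  by_cases hp3 : p = 3
  · exact ⟨1, 1, 0, 0, by rw [hp3]; norm_num⟩
  haveI : Fact p.Prime := ⟨hp⟩
  have hodd : Odd p := hp.odd_of_ne_two hp2
  obtain ⟨x, y, hxy⟩ := neg_one_eq p hp hp2 hp3
  set X : ℤ := x.valMinAbs with hX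
  set Y : ℤ := y.valMinAbs with hY
  have hdvd : (p:ℤ) ∣ X^2 + 3*Y^2 + 1 := by
    apply (ZMod.intCast_zmod_eq_zero_iff_dvd _ p).mp
    push_cast
    rw [hX, hY, ZMod.coe_valMinAbs, ZMod.coe_valMinAbs]
    exact hxy
  obtain ⟨n, hn⟩ := hdvd
  have hoddm : p % 2 = 1 := Nat.odd_iff.mp hodd
  have hXb : 2 * X.natAbs ≤ p - 1 := by
    have h1 := ZMod.natAbs_valMinAbs_le x
    rw [← hX] at h1
    omega
  have hYb : 2 * Y.natAbs ≤ p - 1 := by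
    have h1 := ZMod.natAbs_valMinAbs_le y
    rw [← hY] at h1
    omega
  have hp0 : (0:ℤ) < (p:ℤ) := by exact_mod_cast hp.pos
  have hp1 : (1:ℤ) < (p:ℤ) := by exact_mod_cast hp.one_lt
  zify [hp.one_le] at hXb hYb
  have hNpos : (0:ℤ) < X^2 + 3*Y^2 + 1 := by positivity
  have hNp : X^2 + 3*Y^2 + 1 < (p:ℤ)^2 := by
    nlinarith [sq_abs X, sq_abs Y, hXb, hYb, abs_nonneg X, abs_nonneg Y]
  have hn0 : 0 < n := by nlinarith
  have hnp : n < (p:ℤ) := by nlinarith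
  lift n to ℕ using le_of_lt hn0 with n' hn'
  have hn0' : 0 < n' := by exact_mod_cast hn0
  have hnp' : n' < p := by exact_mod_cast hnp
  exact descend p hp n' hn0' hnp' ⟨X - Y, 2*Y, 1, 0, by push_cast; linear_combination -hn⟩



lemma rep_mul {M N : ℤ} (hM : ∃ a c b d : ℤ, M = (a^2+a*c+c^2) + (b^2+b*d+d^2))
    (hN : ∃ a c b d : ℤ, N = (a^2+a*c+c^2) + (b^2+b*d+d^2)) :
    ∃ a c b d : ℤ, M*N = (a^2+a*c+c^2) + (b^2+b*d+d^2) := by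
  obtain ⟨a1, c1, b1, d1, rfl⟩ := hM
  obtain ⟨a2, c2, b2, d2, rfl⟩ := hN
  refine ⟨a1*a2 - c1*c2 - b1*b2 - b1*d2 - d1*d2,
          a1*c2 + c1*a2 + c1*c2 + b1*d2 - d1*b2,
          a1*b2 - c1*d2 + b1*a2 + b1*c2 + d1*c2,
          a1*d2 + c1*b2 + c1*d2 - b1*c2 + d1*a2, by ring⟩

lemma rep_nat : ∀ n : ℕ, 0 < n → ∃ a c b d : ℤ, (n:ℤ) = (a^2+a*c+c^2) + (b^2+b*d+d^2) := by
  intro n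
  induction n using Nat.strong_induction_on with
  | _ n IH =>
  intro hn
  by_cases h1 : n = 1
  · exact ⟨1, 0, 0, 0, by rw [h1]; norm_num⟩
  have h2 : 2 ≤ n := by omega
  have hpf : n.minFac.Prime := Nat.minFac_prime h1
  have hdvd : n.minFac ∣ n := Nat.minFac_dvd n
  have hq : n = n.minFac * (n / n.minFac) := (Nat.mul_div_cancel' hdvd).symm
  have hql : n / n.minFac < n := Nat.div_lt_self hn hpf.one_lt
  have hqp : 0 < n / n.minFac := Nat.div_pos (Nat.minFac_le hn) hpf.pos
  have hrec := IH (n / n.minFac) hql hqp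
  have hprime := prime_rep n.minFac hpf
  have := rep_mul hprime hrec
  rw [hq]
  push_cast
  exact this

lemma E_to_sq (a c : ℤ) : ∃ x y : ℤ, a^2 + a*c + c^2 = x^2 + 3*y^2 := by
  rcases Int.even_or_odd c with ⟨t, ht⟩ | ⟨t, ht⟩
  · exact ⟨a + t, t, by subst ht; ring⟩
  · rcases Int.even_or_odd a with ⟨s, hs⟩ | ⟨s, hs⟩
    · exact ⟨c + s, s, by subst hs; ring⟩
    · exact ⟨s - t, -(s + t + 1), by subst hs ht; ring⟩

/-- Every positive integer is of the form `x² + 3y² + z² + 3u²`. -/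
theorem sum_x2_3y2_z2_3u2 (m : ℕ) (hm : 0 < m) :
    ∃ x y z u : ℤ, (m : ℤ) = x ^ 2 + 3 * y ^ 2 + z ^ 2 + 3 * u ^ 2 := by
  obtain ⟨a, c, b, d, h⟩ := rep_nat m hm
  obtain ⟨x, y, h1⟩ := E_to_sq a c
  obtain ⟨z, u, h2⟩ := E_to_sq b d
  exact ⟨x, y, z, u, by rw [h, h1, h2]; ring⟩
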